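/- Let V ∈ L_{m,n}(q,Q), let S be the approximating matrix built from V, and let W = (w_{ij}) := S(I − V S). Then for all indices i, j, k ∈ {1,…,m+n−1}: |w_{ij}| ≤ 3Q/(q² m n) and |w_{ij} − w_{ik}| ≤ 3Q/(q² m n). -/

import Mathlib

open MeasureTheory ProbabilityTheory Filter Matrix Topology
open scoped ENNReal NNReal

noncomputable section

namespace Affiliation

/-- Index type for the parameter vector `θ ∈ ℝ^{m+n-1}`:
`Sum.inl i` corresponds to the coordinate `α_i` (`1 ≤ i ≤ m`),
`Sum.inr j` to the coordinate `β_j` (`1 ≤ j ≤ n-1`). -/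
abbrev Idx (m n : ℕ) := Fin m ⊕ Fin (n - 1)

/-- The logistic function `e^x / (1 + e^x)`. -/
def pf (x : ℝ) : ℝ := Real.exp x / (1 + Real.exp x)

/-- `e^x / (1 + e^x)^2`, the derivative of the logistic function. -/
def pf' (x : ℝ) : ℝ := Real.exp x / (1 + Real.exp x) ^ 2

variable {m n : ℕ} {Ω : Type*}

/-- `α_i` read off from `θ`. -/
def alphaF (θ : Idx m n → ℝ) (i : Fin m) : ℝ := θ (Sum.inl i)

/-- `β_j` read off from `θ`, with the convention `β_n = 0`. -/
def betaF (θ : Idx m n → ℝ) (j : Fin n) : ℝ :=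
  if h : (j : ℕ) < n - 1 then θ (Sum.inr ⟨j, h⟩) else 0

/-- The degree `d_i = Σ_j x_{ij}` of event `i`. -/
def degVec (X : Fin m → Fin n → Ω → ℝ) (ω : Ω) (i : Fin m) : ℝ := ∑ j, X i j ω

/-- The degree `b_j = Σ_i x_{ij}` of actor `j`. -/
def bVec (X : Fin m → Fin n → Ω → ℝ) (ω : Ω) (j : Fin n) : ℝ := ∑ i, X i j ω

/-- The vector `g = (d_1, …, d_m, b_1, …, b_{n-1})`. -/
def gvec (X : Fin m → Fin n → Ω → ℝ) (ω : Ω) : Idx m n → ℝ :=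
  Sum.elim (degVec X ω) (fun j => bVec X ω (Fin.castLE (Nat.sub_le n 1) j))

/-- The affiliation network model: the `x_{ij}` are mutually independent `{0,1}`-valued
random variables with `P(x_{ij} = 1) = e^{α_i+β_j}/(1+e^{α_i+β_j})` (convention `β_n = 0`). -/
structure IsAffilModel [MeasurableSpace Ω] (P : Measure Ω)
    (θ : Idx m n → ℝ) (X : Fin m → Fin n → Ω → ℝ) : Prop where
  isProb : IsProbabilityMeasure P
  meas : ∀ i j, Measurable (X i j)
  binary : ∀ i j ω, X i j ω = 0 ∨ X i j ω = 1
  indep : iIndepFun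
    (fun p : Fin m × Fin n => X p.1 p.2) P
  prob_one : ∀ i j, P {ω | X i j ω = 1} = ENNReal.ofReal (pf (alphaF θ i + betaF θ j))

/-- The expectation `E g`. -/
def Eg [MeasurableSpace Ω] (P : Measure Ω) (X : Fin m → Fin n → Ω → ℝ) (k : Idx m n) : ℝ :=
  ∫ ω, gvec X ω k ∂P

/-- The likelihood equations: `θ` is an MLE for the observed degrees `(d, b)`. -/
def IsMLE (d : Fin m → ℝ) (b : Fin (n - 1) → ℝ) (θ : Idx m n → ℝ) : Prop :=
  (∀ i, d i = ∑ j : Fin n, pf (alphaF θ i + betaF θ j)) ∧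
  (∀ j : Fin (n - 1), b j = ∑ i : Fin m, pf (alphaF θ i + θ (Sum.inr j)))

/-- `θ` is an MLE for the degrees observed at the sample point `ω`. -/
def IsMLEat (X : Fin m → Fin n → Ω → ℝ) (ω : Ω) (θ : Idx m n → ℝ) : Prop :=
  IsMLE (degVec X ω) (fun j => bVec X ω (Fin.castLE (Nat.sub_le n 1) j)) θ

/-- The Fisher information matrix `V(θ)`. -/
def fisher (θ : Idx m n → ℝ) : Matrix (Idx m n) (Idx m n) ℝ :=
  fun k l => match k, l with
  | Sum.inl i, Sum.inl i' => if i = i' then ∑ j : Fin n, pf' (alphaF θ i + betaF θ j) else 0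
  | Sum.inl i, Sum.inr j => pf' (alphaF θ i + θ (Sum.inr j))
  | Sum.inr j, Sum.inl i => pf' (alphaF θ i + θ (Sum.inr j))
  | Sum.inr j, Sum.inr j' => if j = j' then ∑ i : Fin m, pf' (alphaF θ i + θ (Sum.inr j)) else 0

/-- `v_{i,m+n} := v_{ii} - Σ_{j ≠ i} v_{ij}`. -/
def vRem (V : Matrix (Idx m n) (Idx m n) ℝ) (i : Idx m n) : ℝ :=
  V i i - ∑ j ∈ Finset.univ.erase i, V i j

/-- `v_{m+n,m+n} := Σ_{i=1}^{m+n-1} v_{i,m+n}`. -/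
def vnnOf (V : Matrix (Idx m n) (Idx m n) ℝ) : ℝ := ∑ i, vRem V i

/-- `v_{m+n,m+n}` for the Fisher information matrix,
`Σ_{i=1}^m (v_{ii} - Σ_{j=m+1}^{m+n-1} v_{ij})`. -/
def vnnFisher (θ : Idx m n → ℝ) : ℝ :=
  ∑ i : Fin m,
    (fisher θ (Sum.inl i) (Sum.inl i) - ∑ j : Fin (n - 1), fisher θ (Sum.inl i) (Sum.inr j))

/-- The approximating matrix `S` built from `V`, with `1/v_{m+n,m+n}` replaced by `1/c`. -/
def approxSWith (V : Matrix (Idx m n) (Idx m n) ℝ) (c : ℝ) : Matrix (Idx m n) (Idx m n) ℝ :=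
  fun k l => match k, l with
  | Sum.inl i, Sum.inl i' => (if i = i' then (V (Sum.inl i) (Sum.inl i))⁻¹ else 0) + c⁻¹
  | Sum.inr j, Sum.inr j' => (if j = j' then (V (Sum.inr j) (Sum.inr j))⁻¹ else 0) + c⁻¹
  | _, _ => -c⁻¹

/-- The approximating matrix `S` built from a matrix `V` in the class `L_{m,n}(q,Q)`. -/
def approxS (V : Matrix (Idx m n) (Idx m n) ℝ) : Matrix (Idx m n) (Idx m n) ℝ :=
  approxSWith V (vnnOf V)

/-- The approximating matrix `S` built from the Fisher information matrix `V(θ)`. -/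
def fisherS (θ : Idx m n → ℝ) : Matrix (Idx m n) (Idx m n) ℝ :=
  approxSWith (fisher θ) (vnnFisher θ)

/-- Membership in the matrix class `L_{m,n}(q,Q)`. -/
structure MemL (m n : ℕ) (q Q : ℝ) (V : Matrix (Idx m n) (Idx m n) ℝ) : Prop where
  symm : V.IsSymm
  nonneg : ∀ i j, 0 ≤ V i j
  zero_ll : ∀ a b : Fin m, a ≠ b → V (Sum.inl a) (Sum.inl b) = 0
  zero_rr : ∀ a b : Fin (n - 1), a ≠ b → V (Sum.inr a) (Sum.inr b) = 0
  cross_lb : ∀ (a : Fin m) (b : Fin (n - 1)), q ≤ V (Sum.inl a) (Sum.inr b)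
  cross_ub : ∀ (a : Fin m) (b : Fin (n - 1)), V (Sum.inl a) (Sum.inr b) ≤ Q
  diag_l_lb : ∀ a : Fin m,
    q ≤ V (Sum.inl a) (Sum.inl a) - ∑ b : Fin (n - 1), V (Sum.inl a) (Sum.inr b)
  diag_l_ub : ∀ a : Fin m,
    V (Sum.inl a) (Sum.inl a) - ∑ b : Fin (n - 1), V (Sum.inl a) (Sum.inr b) ≤ Q
  diag_r : ∀ b : Fin (n - 1), V (Sum.inr b) (Sum.inr b) = ∑ a : Fin m, V (Sum.inl a) (Sum.inr b)

/-- `‖A‖ := max_{i,j} |a_{ij}|`. -/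
def matNorm (A : Matrix (Idx m n) (Idx m n) ℝ) : ℝ :=
  ‖fun p : Idx m n × Idx m n => A p.1 p.2‖

/-- The index (0-based) `i` of `θ ∈ ℝ^{m+n-1}` as an element of `Idx m n`, if it exists. -/
def coordIdx (m n i : ℕ) : Option (Idx m n) :=
  if h : i < m then some (Sum.inl ⟨i, h⟩)
  else if h' : i - m < n - 1 then some (Sum.inr ⟨i - m, h'⟩)
  else none

/-- The `i`-th coordinate (0-based) of a vector `x ∈ ℝ^{m+n-1}` (junk value `0` out of range). -/
def coordVal (x : Idx m n → ℝ) (i : ℕ) : ℝ := ((coordIdx m n i).map x).getD 0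

/-- The upper-left `k × k` block of a matrix indexed by `Idx m n`. -/
def blockK (A : Matrix (Idx m n) (Idx m n) ℝ) (k : ℕ) : Matrix (Fin k) (Fin k) ℝ :=
  fun i j => match coordIdx m n (i : ℕ), coordIdx m n (j : ℕ) with
    | some a, some b => A a b
    | _, _ => 0

/-- The inverse square root `A^{-1/2}` of a positive semidefinite matrix
(junk value `0` if `A` is not positive semidefinite). -/
def invSqrt {k : ℕ} (A : Matrix (Fin k) (Fin k) ℝ) : Matrix (Fin k) (Fin k) ℝ :=
  letI := Classical.propDecidable A.PosSemidef
  if h : A.PosSemidef then (h.1.eigenvectorUnitary.1 * diagonal (Real.sqrt ∘ h.1.eigenvalues) *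
    (star h.1.eigenvectorUnitary : Matrix (Fin k) (Fin k) ℝ))⁻¹ else 0

/-- The standard Gaussian distribution `N(0, I_k)` on `ℝ^k`. -/
def stdGaussian (k : ℕ) : Measure (Fin k → ℝ) :=
  Measure.pi fun _ => gaussianReal 0 1

/-- The function `F(θ)` whose components are
`F_i(θ) = d_i - Σ_k f(α_i + β_k)` and `F_{m+j}(θ) = b_j - Σ_k f(α_k + β_j)`. -/
def Fvec (f : ℝ → ℝ) (d : Fin m → ℝ) (b : Fin (n - 1) → ℝ) (θ : Idx m n → ℝ) : Idx m n → ℝ :=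
  fun k => match k with
  | Sum.inl i => d i - ∑ j : Fin n, f (alphaF θ i + betaF θ j)
  | Sum.inr j => b j - ∑ i : Fin m, f (alphaF θ i + θ (Sum.inr j))

/-- The Jacobian matrix `F'(θ)` of `Fvec f d b`. -/
def jacF (f : ℝ → ℝ) (θ : Idx m n → ℝ) : Matrix (Idx m n) (Idx m n) ℝ :=
  fun k l => match k, l with
  | Sum.inl i, Sum.inl i' =>
      if i = i' then -∑ j : Fin n, deriv f (alphaF θ i + betaF θ j) else 0
  | Sum.inl i, Sum.inr j => -deriv f (alphaF θ i + θ (Sum.inr j))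
  | Sum.inr j, Sum.inl i => -deriv f (alphaF θ i + θ (Sum.inr j))
  | Sum.inr j, Sum.inr j' =>
      if j = j' then -∑ i : Fin m, deriv f (alphaF θ i + θ (Sum.inr j)) else 0

/-- The Newton iterates `θ^{(k+1)} = θ^{(k)} - [F'(θ^{(k)})]⁻¹ F(θ^{(k)})`. -/
def newton (f : ℝ → ℝ) (d : Fin m → ℝ) (b : Fin (n - 1) → ℝ) (θ0 : Idx m n → ℝ) :
    ℕ → Idx m n → ℝ
  | 0 => θ0
  | k + 1 =>
    newton f d b θ0 k - (jacF f (newton f d b θ0 k))⁻¹.mulVec (Fvec f d b (newton f d b θ0 k))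

section WAux

variable {m n : ℕ} {q Q : ℝ} {V : Matrix (Idx m n) (Idx m n) ℝ}

/-- `r_i = v_{ii} - Σ_s v_{i,m+s}`. -/
def rr (V : Matrix (Idx m n) (Idx m n) ℝ) (i : Fin m) : ℝ :=
  V (Sum.inl i) (Sum.inl i) - ∑ s : Fin (n - 1), V (Sum.inl i) (Sum.inr s)

lemma sum_inl_single (hV : MemL m n q Q V) (i : Fin m) (g : Fin m → ℝ) :
    ∑ a, V (Sum.inl i) (Sum.inl a) * g a = V (Sum.inl i) (Sum.inl i) * g i :=
  Finset.sum_eq_single i (fun b _ hb => by rw [hV.zero_ll i b (Ne.symm hb), zero_mul])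
    (fun h => absurd (Finset.mem_univ i) h)

lemma sum_inr_single (hV : MemL m n q Q V) (j : Fin (n - 1)) (g : Fin (n - 1) → ℝ) :
    ∑ s, V (Sum.inr j) (Sum.inr s) * g s = V (Sum.inr j) (Sum.inr j) * g j :=
  Finset.sum_eq_single j (fun b _ hb => by rw [hV.zero_rr j b (Ne.symm hb), zero_mul])
    (fun h => absurd (Finset.mem_univ j) h)

lemma vRem_inl (hV : MemL m n q Q V) (i : Fin m) : vRem V (Sum.inl i) = rr V i := by
  have h1 : ∑ a, V (Sum.inl i) (Sum.inl a) = V (Sum.inl i) (Sum.inl i) := by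
    simpa using sum_inl_single hV i (fun _ => 1)
  rw [vRem, Finset.sum_erase_eq_sub (Finset.mem_univ _), Fintype.sum_sum_type, h1, rr]
  ring

lemma vRem_inr (hV : MemL m n q Q V) (j : Fin (n - 1)) : vRem V (Sum.inr j) = 0 := by
  have hsw : ∀ a, V (Sum.inr j) (Sum.inl a) = V (Sum.inl a) (Sum.inr j) :=
    fun a => hV.symm.apply _ _
  have h1 : ∑ s, V (Sum.inr j) (Sum.inr s) = V (Sum.inr j) (Sum.inr j) := by
    simpa using sum_inr_single hV j (fun _ => 1)
  rw [vRem, Finset.sum_erase_eq_sub (Finset.mem_univ _), Fintype.sum_sum_type, h1]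
  simp only [hsw]
  rw [← hV.diag_r j]
  ring

lemma vnnOf_eq (hV : MemL m n q Q V) : vnnOf V = ∑ i, rr V i := by
  rw [vnnOf, Fintype.sum_sum_type]
  simp [vRem_inl hV, vRem_inr hV]

lemma T_ll (hV : MemL m n q Q V) (hc : vnnOf V ≠ 0) (i l : Fin m)
    (hvn : V (Sum.inl i) (Sum.inl i) ≠ 0) :
    (V * approxS V) (Sum.inl i) (Sum.inl l)
      = (if i = l then (1:ℝ) else 0) + rr V i / vnnOf V := by
  rw [Matrix.mul_apply, Fintype.sum_sum_type, sum_inl_single hV i]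
  simp only [approxS, approxSWith]
  rw [← Finset.sum_mul, rr]
  rcases eq_or_ne i l with h | h
  · subst h; simp only [if_pos rfl, ↓reduceIte]; field_simp; ring
  · simp only [if_neg h]; field_simp; ring

lemma T_lr (hV : MemL m n q Q V) (hc : vnnOf V ≠ 0) (i : Fin m) (l : Fin (n - 1)) :
    (V * approxS V) (Sum.inl i) (Sum.inr l)
      = V (Sum.inl i) (Sum.inr l) / V (Sum.inr l) (Sum.inr l) - rr V i / vnnOf V := by
  rw [Matrix.mul_apply, Fintype.sum_sum_type]
  simp only [approxS, approxSWith]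
  have h2 : ∑ s : Fin (n - 1), V (Sum.inl i) (Sum.inr s) *
      ((if s = l then (V (Sum.inr s) (Sum.inr s))⁻¹ else 0) + (vnnOf V)⁻¹)
      = V (Sum.inl i) (Sum.inr l) * (V (Sum.inr l) (Sum.inr l))⁻¹
        + (∑ s : Fin (n - 1), V (Sum.inl i) (Sum.inr s)) * (vnnOf V)⁻¹ := by
    simp only [mul_add, Finset.sum_add_distrib, ← Finset.sum_mul]
    congr 1
    rw [Finset.sum_congr rfl (fun s _ => by rw [mul_ite, mul_zero]), Finset.sum_ite_eq']
    simp
  rw [h2, sum_inl_single hV i, rr]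
  field_simp
  ring

lemma T_rl (hV : MemL m n q Q V) (hc : vnnOf V ≠ 0) (j : Fin (n - 1)) (l : Fin m) :
    (V * approxS V) (Sum.inr j) (Sum.inl l)
      = V (Sum.inl l) (Sum.inr j) / V (Sum.inl l) (Sum.inl l) := by
  have hsw : ∀ a : Fin m, V (Sum.inr j) (Sum.inl a) = V (Sum.inl a) (Sum.inr j) :=
    fun a => hV.symm.apply _ _
  rw [Matrix.mul_apply, Fintype.sum_sum_type, sum_inr_single hV j]
  simp only [approxS, approxSWith]
  have h1 : ∑ a : Fin m, V (Sum.inr j) (Sum.inl a) *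
      ((if a = l then (V (Sum.inl a) (Sum.inl a))⁻¹ else 0) + (vnnOf V)⁻¹)
      = V (Sum.inl l) (Sum.inr j) * (V (Sum.inl l) (Sum.inl l))⁻¹
        + V (Sum.inr j) (Sum.inr j) * (vnnOf V)⁻¹ := by
    simp only [mul_add, Finset.sum_add_distrib, ← Finset.sum_mul]
    congr 1
    · rw [Finset.sum_congr rfl (fun a _ => by rw [mul_ite, mul_zero]), Finset.sum_ite_eq']
      simp [hsw]
    · simp only [hsw]
      rw [← hV.diag_r j]
  rw [h1, div_eq_mul_inv]
  ring

lemma T_rr (hV : MemL m n q Q V) (hc : vnnOf V ≠ 0) (j l : Fin (n - 1))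
    (hun : V (Sum.inr j) (Sum.inr j) ≠ 0) :
    (V * approxS V) (Sum.inr j) (Sum.inr l) = if j = l then (1:ℝ) else 0 := by
  have hsw : ∀ a : Fin m, V (Sum.inr j) (Sum.inl a) = V (Sum.inl a) (Sum.inr j) :=
    fun a => hV.symm.apply _ _
  rw [Matrix.mul_apply, Fintype.sum_sum_type, sum_inr_single hV j]
  simp only [approxS, approxSWith, hsw]
  rw [← Finset.sum_mul, ← hV.diag_r j]
  rcases eq_or_ne j l with h | h
  · subst h; simp only [if_pos rfl, ↓reduceIte]; field_simp; ring
  · simp only [if_neg h]; field_simp; ring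

lemma W_ll (hV : MemL m n q Q V) (hc : vnnOf V ≠ 0)
    (hv : ∀ a : Fin m, V (Sum.inl a) (Sum.inl a) ≠ 0)
    (hu : ∀ s : Fin (n - 1), V (Sum.inr s) (Sum.inr s) ≠ 0) (i l : Fin m) :
    (approxS V * (1 - V * approxS V)) (Sum.inl i) (Sum.inl l)
      = -(rr V i / (V (Sum.inl i) (Sum.inl i) * vnnOf V))
        - rr V l / (V (Sum.inl l) (Sum.inl l) * vnnOf V) := by
  have hE1 : ∀ a : Fin m, (1 - V * approxS V) (Sum.inl a) (Sum.inl l)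
      = -(rr V a / vnnOf V) := by
    intro a
    rw [Matrix.sub_apply, Matrix.one_apply, T_ll hV hc a l (hv a)]
    simp only [Sum.inl.injEq]
    ring
  have hE2 : ∀ s : Fin (n - 1), (1 - V * approxS V) (Sum.inr s) (Sum.inl l)
      = -(V (Sum.inl l) (Sum.inr s) / V (Sum.inl l) (Sum.inl l)) := by
    intro s
    rw [Matrix.sub_apply, Matrix.one_apply, T_rl hV hc s l, if_neg (by simp)]
    ring
  rw [Matrix.mul_apply, Fintype.sum_sum_type]
  simp only [hE1, hE2]
  simp only [approxS, approxSWith]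
  have h1 : ∑ a : Fin m, ((if i = a then (V (Sum.inl i) (Sum.inl i))⁻¹ else 0) + (vnnOf V)⁻¹)
      * -(rr V a / vnnOf V)
      = (V (Sum.inl i) (Sum.inl i))⁻¹ * -(rr V i / vnnOf V)
        + (vnnOf V)⁻¹ * -((∑ a, rr V a) / vnnOf V) := by
    simp only [add_mul, Finset.sum_add_distrib, ← Finset.mul_sum]
    congr 1
    · rw [Finset.sum_congr rfl (fun a _ => by rw [ite_mul, zero_mul]), Finset.sum_ite_eq]
      simp
    · rw [Finset.sum_neg_distrib, ← Finset.sum_div]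
  have h2 : ∑ s : Fin (n - 1), -(vnnOf V)⁻¹
      * -(V (Sum.inl l) (Sum.inr s) / V (Sum.inl l) (Sum.inl l))
      = (vnnOf V)⁻¹ * ((V (Sum.inl l) (Sum.inl l) - rr V l) / V (Sum.inl l) (Sum.inl l)) := by
    simp only [neg_mul_neg]
    rw [← Finset.mul_sum, ← Finset.sum_div,
      show ∑ s : Fin (n - 1), V (Sum.inl l) (Sum.inr s)
        = V (Sum.inl l) (Sum.inl l) - rr V l from by rw [rr]; ring]
  have hvi := hv i
  have hvl := hv l
  rw [h1, h2, ← vnnOf_eq hV]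
  field_simp
  ring

lemma W_lr (hV : MemL m n q Q V) (hc : vnnOf V ≠ 0)
    (hv : ∀ a : Fin m, V (Sum.inl a) (Sum.inl a) ≠ 0)
    (hu : ∀ s : Fin (n - 1), V (Sum.inr s) (Sum.inr s) ≠ 0) (i : Fin m) (l : Fin (n - 1)) :
    (approxS V * (1 - V * approxS V)) (Sum.inl i) (Sum.inr l)
      = rr V i / (V (Sum.inl i) (Sum.inl i) * vnnOf V)
        - V (Sum.inl i) (Sum.inr l)
          / (V (Sum.inl i) (Sum.inl i) * V (Sum.inr l) (Sum.inr l)) := by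
  have hE1 : ∀ a : Fin m, (1 - V * approxS V) (Sum.inl a) (Sum.inr l)
      = rr V a / vnnOf V - V (Sum.inl a) (Sum.inr l) / V (Sum.inr l) (Sum.inr l) := by
    intro a
    rw [Matrix.sub_apply, Matrix.one_apply, T_lr hV hc a l, if_neg (by simp)]
    ring
  have hE2 : ∀ s : Fin (n - 1), (1 - V * approxS V) (Sum.inr s) (Sum.inr l) = 0 := by
    intro s
    rw [Matrix.sub_apply, Matrix.one_apply, T_rr hV hc s l (hu s)]
    simp only [Sum.inr.injEq]
    ring
  rw [Matrix.mul_apply, Fintype.sum_sum_type]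
  simp only [hE1, hE2, mul_zero, Finset.sum_const_zero, add_zero]
  simp only [approxS, approxSWith]
  have h1 : ∑ a : Fin m, ((if i = a then (V (Sum.inl i) (Sum.inl i))⁻¹ else 0) + (vnnOf V)⁻¹)
      * (rr V a / vnnOf V - V (Sum.inl a) (Sum.inr l) / V (Sum.inr l) (Sum.inr l))
      = (V (Sum.inl i) (Sum.inl i))⁻¹
          * (rr V i / vnnOf V - V (Sum.inl i) (Sum.inr l) / V (Sum.inr l) (Sum.inr l))
        + (vnnOf V)⁻¹ * ((∑ a, rr V a) / vnnOf V
            - (∑ a, V (Sum.inl a) (Sum.inr l)) / V (Sum.inr l) (Sum.inr l)) := by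
    simp only [add_mul, Finset.sum_add_distrib, ← Finset.mul_sum]
    congr 1
    · rw [Finset.sum_congr rfl (fun a _ => by rw [ite_mul, zero_mul]), Finset.sum_ite_eq]
      simp
    · rw [Finset.sum_sub_distrib, ← Finset.sum_div, ← Finset.sum_div]
  have hvi := hv i
  have hul := hu l
  rw [h1, ← vnnOf_eq hV, ← hV.diag_r l]
  field_simp
  ring

lemma W_rl (hV : MemL m n q Q V) (hc : vnnOf V ≠ 0)
    (hv : ∀ a : Fin m, V (Sum.inl a) (Sum.inl a) ≠ 0)
    (hu : ∀ s : Fin (n - 1), V (Sum.inr s) (Sum.inr s) ≠ 0) (j : Fin (n - 1)) (l : Fin m) :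
    (approxS V * (1 - V * approxS V)) (Sum.inr j) (Sum.inl l)
      = rr V l / (V (Sum.inl l) (Sum.inl l) * vnnOf V)
        - V (Sum.inl l) (Sum.inr j)
          / (V (Sum.inl l) (Sum.inl l) * V (Sum.inr j) (Sum.inr j)) := by
  have hE1 : ∀ a : Fin m, (1 - V * approxS V) (Sum.inl a) (Sum.inl l)
      = -(rr V a / vnnOf V) := by
    intro a
    rw [Matrix.sub_apply, Matrix.one_apply, T_ll hV hc a l (hv a)]
    simp only [Sum.inl.injEq]
    ring
  have hE2 : ∀ s : Fin (n - 1), (1 - V * approxS V) (Sum.inr s) (Sum.inl l)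
      = -(V (Sum.inl l) (Sum.inr s) / V (Sum.inl l) (Sum.inl l)) := by
    intro s
    rw [Matrix.sub_apply, Matrix.one_apply, T_rl hV hc s l, if_neg (by simp)]
    ring
  rw [Matrix.mul_apply, Fintype.sum_sum_type]
  simp only [hE1, hE2]
  simp only [approxS, approxSWith]
  have h1 : ∑ a : Fin m, -(vnnOf V)⁻¹ * -(rr V a / vnnOf V)
      = (vnnOf V)⁻¹ * ((∑ a, rr V a) / vnnOf V) := by
    simp only [neg_mul_neg]
    rw [← Finset.mul_sum, ← Finset.sum_div]
  have h2 : ∑ s : Fin (n - 1),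
      ((if j = s then (V (Sum.inr j) (Sum.inr j))⁻¹ else 0) + (vnnOf V)⁻¹)
        * -(V (Sum.inl l) (Sum.inr s) / V (Sum.inl l) (Sum.inl l))
      = (V (Sum.inr j) (Sum.inr j))⁻¹
          * -(V (Sum.inl l) (Sum.inr j) / V (Sum.inl l) (Sum.inl l))
        + (vnnOf V)⁻¹ * -((V (Sum.inl l) (Sum.inl l) - rr V l) / V (Sum.inl l) (Sum.inl l)) := by
    simp only [add_mul, Finset.sum_add_distrib, ← Finset.mul_sum]
    congr 1
    · rw [Finset.sum_congr rfl (fun s _ => by rw [ite_mul, zero_mul]), Finset.sum_ite_eq]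
      simp
    · rw [Finset.sum_neg_distrib, ← Finset.sum_div,
        show ∑ s : Fin (n - 1), V (Sum.inl l) (Sum.inr s)
          = V (Sum.inl l) (Sum.inl l) - rr V l from by rw [rr]; ring]
  have hvl := hv l
  have huj := hu j
  rw [h1, h2, ← vnnOf_eq hV]
  field_simp
  ring

lemma W_rr (hV : MemL m n q Q V) (hc : vnnOf V ≠ 0)
    (hv : ∀ a : Fin m, V (Sum.inl a) (Sum.inl a) ≠ 0)
    (hu : ∀ s : Fin (n - 1), V (Sum.inr s) (Sum.inr s) ≠ 0) (j l : Fin (n - 1)) :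
    (approxS V * (1 - V * approxS V)) (Sum.inr j) (Sum.inr l) = 0 := by
  have hE1 : ∀ a : Fin m, (1 - V * approxS V) (Sum.inl a) (Sum.inr l)
      = rr V a / vnnOf V - V (Sum.inl a) (Sum.inr l) / V (Sum.inr l) (Sum.inr l) := by
    intro a
    rw [Matrix.sub_apply, Matrix.one_apply, T_lr hV hc a l, if_neg (by simp)]
    ring
  have hE2 : ∀ s : Fin (n - 1), (1 - V * approxS V) (Sum.inr s) (Sum.inr l) = 0 := by
    intro s
    rw [Matrix.sub_apply, Matrix.one_apply, T_rr hV hc s l (hu s)]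
    simp only [Sum.inr.injEq]
    ring
  rw [Matrix.mul_apply, Fintype.sum_sum_type]
  simp only [hE1, hE2, mul_zero, Finset.sum_const_zero, add_zero]
  simp only [approxS, approxSWith]
  have h1 : ∑ a : Fin m, -(vnnOf V)⁻¹
      * (rr V a / vnnOf V - V (Sum.inl a) (Sum.inr l) / V (Sum.inr l) (Sum.inr l))
      = -(vnnOf V)⁻¹ * ((∑ a, rr V a) / vnnOf V
          - (∑ a, V (Sum.inl a) (Sum.inr l)) / V (Sum.inr l) (Sum.inr l)) := by
    rw [← Finset.mul_sum, Finset.sum_sub_distrib, ← Finset.sum_div, ← Finset.sum_div]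
  rw [h1, ← vnnOf_eq hV, ← hV.diag_r l]
  field_simp
  rw [div_self (hu l)]
  ring

lemma v_lb (hn : 1 ≤ n) (hq : 0 < q) (hV : MemL m n q Q V) (i : Fin m) :
    (n : ℝ) * q ≤ V (Sum.inl i) (Sum.inl i) := by
  have h1 := hV.diag_l_lb i
  have h2 : ((n - 1 : ℕ) : ℝ) * q ≤ ∑ s : Fin (n - 1), V (Sum.inl i) (Sum.inr s) := by
    have := Finset.card_nsmul_le_sum Finset.univ (fun s => V (Sum.inl i) (Sum.inr s)) q
      (fun s _ => hV.cross_lb i s)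
    simpa [Finset.card_univ, nsmul_eq_mul] using this
  have hcast : ((n - 1 : ℕ) : ℝ) = (n : ℝ) - 1 := by
    rw [Nat.cast_sub hn]; simp
  rw [hcast] at h2
  have h3 : (n : ℝ) * q = ((n : ℝ) - 1) * q + q := by ring
  linarith

lemma u_lb (hq : 0 < q) (hV : MemL m n q Q V) (j : Fin (n - 1)) :
    (m : ℝ) * q ≤ V (Sum.inr j) (Sum.inr j) := by
  rw [hV.diag_r j]
  have := Finset.card_nsmul_le_sum Finset.univ (fun a => V (Sum.inl a) (Sum.inr j)) q
    (fun a _ => hV.cross_lb a j)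
  simpa [Finset.card_univ, nsmul_eq_mul] using this

lemma c_lb (hq : 0 < q) (hV : MemL m n q Q V) : (m : ℝ) * q ≤ vnnOf V := by
  rw [vnnOf_eq hV]
  have := Finset.card_nsmul_le_sum Finset.univ (fun a => rr V a) q
    (fun a _ => (hV.diag_l_lb a : q ≤ rr V a))
  simpa [Finset.card_univ, nsmul_eq_mul] using this

lemma div_le_B {q Q : ℝ} (hq : 0 < q) (hQ : 0 ≤ Q) {mm nn : ℝ} (hm : 0 < mm) (hn : 0 < nn)
    {a d1 d2 : ℝ} (ha : a ≤ Q) (h1 : nn * q ≤ d1) (h2 : mm * q ≤ d2) :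
    a / (d1 * d2) ≤ Q / (q ^ 2 * mm * nn) := by
  have hd1 : 0 < d1 := lt_of_lt_of_le (by positivity) h1
  have key : a / (d1 * d2) ≤ Q / (nn * q * (mm * q)) :=
    div_le_div₀ hQ ha (by positivity) (mul_le_mul h1 h2 (by positivity) hd1.le)
  calc a / (d1 * d2) ≤ Q / (nn * q * (mm * q)) := key
    _ = Q / (q ^ 2 * mm * nn) := by ring_nf

end WAux

/-- entrywise bounds for `W = S (I - V S)`. -/
theorem W_entry_bounds (m n : ℕ) (hm : 1 ≤ m) (hmn : m ≤ n)
    (q Q : ℝ) (hq : 0 < q) (hqQ : q ≤ Q)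
    (V : Matrix (Idx m n) (Idx m n) ℝ) (hV : MemL m n q Q V) :
    ∀ i j k : Idx m n,
      |(approxS V * (1 - V * approxS V)) i j| ≤ 3 * Q / (q ^ 2 * m * n) ∧
      |(approxS V * (1 - V * approxS V)) i j - (approxS V * (1 - V * approxS V)) i k| ≤
        3 * Q / (q ^ 2 * m * n) := by
  intro i j k
  have hn : 1 ≤ n := le_trans hm hmn
  have hmR : (0:ℝ) < m := by exact_mod_cast hm
  have hnR : (0:ℝ) < n := by exact_mod_cast hn
  have hQ0 : 0 ≤ Q := le_trans hq.le hqQ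
  have hclb : (m:ℝ) * q ≤ vnnOf V := c_lb hq hV
  have hc : vnnOf V ≠ 0 := ne_of_gt (lt_of_lt_of_le (by positivity) hclb)
  have hvlb : ∀ a : Fin m, (n:ℝ) * q ≤ V (Sum.inl a) (Sum.inl a) := v_lb hn hq hV
  have hulb : ∀ s : Fin (n - 1), (m:ℝ) * q ≤ V (Sum.inr s) (Sum.inr s) := u_lb hq hV
  have hv : ∀ a : Fin m, V (Sum.inl a) (Sum.inl a) ≠ 0 :=
    fun a => ne_of_gt (lt_of_lt_of_le (by positivity) (hvlb a))
  have hu : ∀ s : Fin (n - 1), V (Sum.inr s) (Sum.inr s) ≠ 0 :=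
    fun s => ne_of_gt (lt_of_lt_of_le (by positivity) (hulb s))
  set B := Q / (q ^ 2 * m * n) with hB
  have hB0 : 0 ≤ B := by positivity
  have h3B : 3 * Q / (q ^ 2 * m * n) = 3 * B := by rw [hB]; ring
  -- bounds on the basic terms
  have hx : ∀ a : Fin m,
      0 ≤ rr V a / (V (Sum.inl a) (Sum.inl a) * vnnOf V) ∧
      rr V a / (V (Sum.inl a) (Sum.inl a) * vnnOf V) ≤ B := by
    intro a
    have hva := hvlb a
    refine ⟨div_nonneg (le_trans hq.le (hV.diag_l_lb a)) ?_, ?_⟩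
    · have : (0:ℝ) < V (Sum.inl a) (Sum.inl a) := lt_of_lt_of_le (by positivity) hva
      have : (0:ℝ) < vnnOf V := lt_of_lt_of_le (by positivity) hclb
      nlinarith [lt_of_lt_of_le (show (0:ℝ) < n * q by positivity) hva]
    · exact div_le_B hq hQ0 hmR hnR (hV.diag_l_ub a) hva hclb
  have hy : ∀ (a : Fin m) (s : Fin (n - 1)),
      0 ≤ V (Sum.inl a) (Sum.inr s) / (V (Sum.inl a) (Sum.inl a) * V (Sum.inr s) (Sum.inr s)) ∧
      V (Sum.inl a) (Sum.inr s) / (V (Sum.inl a) (Sum.inl a) * V (Sum.inr s) (Sum.inr s)) ≤ B := by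
    intro a s
    have hva := hvlb a
    have hus := hulb s
    refine ⟨div_nonneg (hV.nonneg _ _) ?_, ?_⟩
    · have h1 : (0:ℝ) < V (Sum.inl a) (Sum.inl a) := lt_of_lt_of_le (by positivity) hva
      have h2 : (0:ℝ) < V (Sum.inr s) (Sum.inr s) := lt_of_lt_of_le (by positivity) hus
      positivity
    · exact div_le_B hq hQ0 hmR hnR (hV.cross_ub a s) hva hus
  -- entrywise bounds
  have wll : ∀ a l : Fin m,
      |(approxS V * (1 - V * approxS V)) (Sum.inl a) (Sum.inl l)| ≤ 2 * B := by
    intro a l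
    rw [W_ll hV hc hv hu a l]
    have h1 := hx a
    have h2 := hx l
    rw [abs_le]
    constructor <;> [skip; skip] <;> first
      | (exact by linarith [h1.1, h1.2, h2.1, h2.2])
  have wlr : ∀ (a : Fin m) (l : Fin (n - 1)),
      |(approxS V * (1 - V * approxS V)) (Sum.inl a) (Sum.inr l)| ≤ B := by
    intro a l
    rw [W_lr hV hc hv hu a l]
    have h1 := hx a
    have h2 := hy a l
    rw [abs_le]
    exact ⟨by linarith [h1.1, h1.2, h2.1, h2.2], by linarith [h1.1, h1.2, h2.1, h2.2]⟩
  have wrl : ∀ (s : Fin (n - 1)) (l : Fin m),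
      |(approxS V * (1 - V * approxS V)) (Sum.inr s) (Sum.inl l)| ≤ B := by
    intro s l
    rw [W_rl hV hc hv hu s l]
    have h1 := hx l
    have h2 := hy l s
    rw [abs_le]
    exact ⟨by linarith [h1.1, h1.2, h2.1, h2.2], by linarith [h1.1, h1.2, h2.1, h2.2]⟩
  have wrr : ∀ s l : Fin (n - 1),
      |(approxS V * (1 - V * approxS V)) (Sum.inr s) (Sum.inr l)| ≤ 0 := by
    intro s l
    rw [W_rr hV hc hv hu s l]
    simp
  have wdll : ∀ a l l' : Fin m,
      |(approxS V * (1 - V * approxS V)) (Sum.inl a) (Sum.inl l)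
        - (approxS V * (1 - V * approxS V)) (Sum.inl a) (Sum.inl l')| ≤ B := by
    intro a l l'
    rw [W_ll hV hc hv hu a l, W_ll hV hc hv hu a l']
    have h1 := hx l
    have h2 := hx l'
    rw [show -(rr V a / (V (Sum.inl a) (Sum.inl a) * vnnOf V))
          - rr V l / (V (Sum.inl l) (Sum.inl l) * vnnOf V)
          - (-(rr V a / (V (Sum.inl a) (Sum.inl a) * vnnOf V))
          - rr V l' / (V (Sum.inl l') (Sum.inl l') * vnnOf V))
        = rr V l' / (V (Sum.inl l') (Sum.inl l') * vnnOf V)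
          - rr V l / (V (Sum.inl l) (Sum.inl l) * vnnOf V) from by ring]
    rw [abs_le]
    exact ⟨by linarith [h1.1, h1.2, h2.1, h2.2], by linarith [h1.1, h1.2, h2.1, h2.2]⟩
  rw [h3B]
  have habs : ∀ x y : ℝ, |x - y| ≤ |x| + |y| := fun x y => abs_sub x y
  rcases i with a | s <;> rcases j with b | t
  · refine ⟨by linarith [wll a b], ?_⟩
    rcases k with c | u
    · linarith [wdll a b c]
    · linarith [habs ((approxS V * (1 - V * approxS V)) (Sum.inl a) (Sum.inl b))
        ((approxS V * (1 - V * approxS V)) (Sum.inl a) (Sum.inr u)), wll a b, wlr a u]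
  · refine ⟨by linarith [wlr a t], ?_⟩
    rcases k with c | u
    · linarith [habs ((approxS V * (1 - V * approxS V)) (Sum.inl a) (Sum.inr t))
        ((approxS V * (1 - V * approxS V)) (Sum.inl a) (Sum.inl c)), wlr a t, wll a c]
    · linarith [habs ((approxS V * (1 - V * approxS V)) (Sum.inl a) (Sum.inr t))
        ((approxS V * (1 - V * approxS V)) (Sum.inl a) (Sum.inr u)), wlr a t, wlr a u]
  · refine ⟨by linarith [wrl s b], ?_⟩
    rcases k with c | u
    · linarith [habs ((approxS V * (1 - V * approxS V)) (Sum.inr s) (Sum.inl b))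
        ((approxS V * (1 - V * approxS V)) (Sum.inr s) (Sum.inl c)), wrl s b, wrl s c]
    · linarith [habs ((approxS V * (1 - V * approxS V)) (Sum.inr s) (Sum.inl b))
        ((approxS V * (1 - V * approxS V)) (Sum.inr s) (Sum.inr u)), wrl s b, wrr s u]
  · refine ⟨by linarith [wrr s t], ?_⟩
    rcases k with c | u
    · linarith [habs ((approxS V * (1 - V * approxS V)) (Sum.inr s) (Sum.inr t))
        ((approxS V * (1 - V * approxS V)) (Sum.inr s) (Sum.inl c)), wrr s t, wrl s c]
    · linarith [habs ((approxS V * (1 - V * approxS V)) (Sum.inr s) (Sum.inr t))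
        ((approxS V * (1 - V * approxS V)) (Sum.inr s) (Sum.inr u)), wrr s t, wrr s u]


end Affiliation
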